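/- Let A be a commutative Noetherian ring, f ∈ A, and C a finitely generated A-module with no f-torsion (i.e. multiplication by f is injective on C). Then the f-adic completion C^∧_f has no f-torsion. -/

import Mathlib

theorem stmt6 (A : Type*) [CommRing A] [IsNoetherianRing A]
    (C : Type*) [AddCommGroup C] [Module A C] [Module.Finite A C] (f : A)
    (hC : ∀ c : C, f • c = 0 → c = 0) :
    ∀ c : AdicCompletion (Ideal.span {f}) C, (∃ k : ℕ, 1 ≤ k ∧ f ^ k • c = 0) → c = 0 := by
  -- injectivity of f^k on C
  have hCk : ∀ (k : ℕ) (x y : C), f ^ k • x = f ^ k • y → x = y := by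
    intro k
    induction k with
    | zero => intro x y h; simpa using h
    | succ n ih =>
      intro x y h
      apply ih
      apply sub_eq_zero.mp
      apply hC
      rw [smul_sub, sub_eq_zero]
      rw [pow_succ, mul_comm, mul_smul, mul_smul] at h
      exact h
  intro c ⟨k, hk, hck⟩
  apply AdicCompletion.ext
  intro m
  have hsurj := Submodule.mkQ_surjective ((Ideal.span {f}) ^ (m + k) • ⊤ : Submodule A C)
  obtain ⟨x, hx⟩ := hsurj (c.val (m + k))
  -- f^k • x ∈ I^(m+k) • ⊤
  have h1 : (f ^ k • c).val (m + k) = 0 := by rw [hck]; rfl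
  have h2 : Submodule.mkQ _ (f ^ k • x) = (0 : C ⧸ ((Ideal.span {f}) ^ (m + k) • ⊤ : Submodule A C)) := by
    rw [map_smul, hx]
    exact h1
  have h3 : f ^ k • x ∈ ((Ideal.span {f}) ^ (m + k) • ⊤ : Submodule A C) := by
    rwa [Submodule.mkQ_apply, Submodule.Quotient.mk_eq_zero] at h2
  rw [Ideal.span_singleton_pow, Submodule.ideal_span_singleton_smul] at h3
  rw [← SetLike.mem_coe, Submodule.coe_pointwise_smul] at h3
  obtain ⟨y, -, hy⟩ := Set.mem_smul_set.mp h3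
  -- f^k • x = f^(m+k) • y ⇒ x = f^m • y
  have hxy : x = f ^ m • y := by
    apply hCk k
    rw [← hy, pow_add, mul_comm, mul_smul]
  have hxm : x ∈ ((Ideal.span {f}) ^ m • ⊤ : Submodule A C) := by
    rw [Ideal.span_singleton_pow, Submodule.ideal_span_singleton_smul, hxy]
    exact Submodule.smul_mem_pointwise_smul y _ _ trivial
  have := AdicCompletion.transitionMap_comp_eval_apply (Ideal.span {f}) C (Nat.le_add_right m k) c
  rw [← this, ← hx, Submodule.mkQ_apply]
  show Submodule.Quotient.mk x = (0 : C ⧸ ((Ideal.span {f}) ^ m • ⊤ : Submodule A C))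
  rwa [Submodule.Quotient.mk_eq_zero]
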